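/- arXiv:2307.07973 — 3 statements merged into one kernel-verified Lean document; each statement's English description precedes it below -/
import Mathlib

section
/- In an HCM satisfying the normality assumption (X_i | X_C is conditionally standard-normal after standardization if and only if pa_i ⊆ C, for C a subset of the non-descendants of i), for every parent j ∈ pa_i, X_i is NOT conditionally independent of X_j given X_{pa_i \ {j}}. -/
open MeasureTheory ProbabilityTheory

/-- The σ-algebra generated by the variables `X j`, `j ∈ S` (conditioning on `X_S`). -/
def condAlg {Ω : Type*} {d : ℕ} (X : Fin d → Ω → ℝ) (S : Set (Fin d)) :
    MeasurableSpace Ω :=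
  MeasurableSpace.comap (fun ω => fun j : S => X j ω) inferInstance

/-- The standardized residual `(X_i − E[X_i | X_C]) / sqrt(Var[X_i | X_C])`. -/
noncomputable def stdResid {Ω : Type*} [MeasurableSpace Ω] (μ : Measure Ω)
    {d : ℕ} (X : Fin d → Ω → ℝ) (i : Fin d) (C : Set (Fin d)) : Ω → ℝ :=
  fun ω =>
    (X i ω - (μ[X i | condAlg X C]) ω) /
      Real.sqrt ((μ[fun ω' => (X i ω' - (μ[X i | condAlg X C]) ω') ^ 2 | condAlg X C]) ω)

lemma condAlg_eq {Ω : Type*} {d : ℕ} (X : Fin d → Ω → ℝ) (S : Set (Fin d)) :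
    condAlg X S = ⨆ k : S, MeasurableSpace.comap (X k) inferInstance := by
  have h : (inferInstance : MeasurableSpace (S → ℝ))
      = ⨆ k : S, MeasurableSpace.comap (fun b => b k) inferInstance := rfl
  rw [condAlg, h, MeasurableSpace.comap_iSup]
  exact iSup_congr fun k => MeasurableSpace.comap_comp

lemma condAlg_split {Ω : Type*} {d : ℕ} (X : Fin d → Ω → ℝ) {S : Set (Fin d)} {j : Fin d}
    (hj : j ∈ S) :
    condAlg X S = condAlg X (S \ {j}) ⊔ MeasurableSpace.comap (X j) inferInstance := by
  rw [condAlg_eq, condAlg_eq]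
  apply le_antisymm
  · refine iSup_le fun k => ?_
    by_cases hk : (k : Fin d) = j
    · rw [hk]; exact le_sup_right
    · exact le_trans (le_iSup (fun k : ↥(S \ {j}) => MeasurableSpace.comap (X k) inferInstance)
        ⟨k, k.2, hk⟩) le_sup_left
  · refine sup_le (iSup_le fun k => le_iSup (fun k : ↥S => MeasurableSpace.comap (X k) inferInstance) ⟨k, k.2.1⟩)
      (le_iSup (fun k : ↥S => MeasurableSpace.comap (X k) inferInstance) ⟨j, hj⟩)

lemma sup_eq_generateFrom_inter {Ω : Type*} (m₁ m₂ : MeasurableSpace Ω) :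
    m₁ ⊔ m₂ = MeasurableSpace.generateFrom
      {s | ∃ a, MeasurableSet[m₁] a ∧ ∃ v, MeasurableSet[m₂] v ∧ s = a ∩ v} := by
  refine le_antisymm (sup_le ?_ ?_) (MeasurableSpace.generateFrom_le ?_)
  · exact fun s hs => MeasurableSpace.measurableSet_generateFrom
      ⟨s, hs, Set.univ, MeasurableSet.univ, (Set.inter_univ s).symm⟩
  · exact fun s hs => MeasurableSpace.measurableSet_generateFrom
      ⟨Set.univ, MeasurableSet.univ, s, hs, (Set.univ_inter s).symm⟩
  · rintro s ⟨a, ha, v, hv, rfl⟩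
    exact ((le_sup_left : m₁ ≤ m₁ ⊔ m₂) a ha).inter ((le_sup_right : m₂ ≤ m₁ ⊔ m₂) v hv)

lemma isPiSystem_inter_alg {Ω : Type*} (m₁ m₂ : MeasurableSpace Ω) :
    IsPiSystem {s | ∃ a, MeasurableSet[m₁] a ∧ ∃ v, MeasurableSet[m₂] v ∧ s = a ∩ v} := by
  rintro s ⟨a, ha, v, hv, rfl⟩ t ⟨b, hb, w, hw, rfl⟩ -
  exact ⟨a ∩ b, ha.inter hb, v ∩ w, hv.inter hw, Set.inter_inter_inter_comm a v b w⟩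

lemma indicator_eq_one_mul {Ω : Type*} (u : Set Ω) (F : Ω → ℝ) :
    u.indicator F = fun x => u.indicator (fun _ => (1:ℝ)) x * F x := by
  funext x; by_cases hx : x ∈ u <;> simp [Set.indicator, hx]

section Core

variable {Ω : Type*} {m𝒢 : MeasurableSpace Ω} {mΩ : MeasurableSpace Ω} [StandardBorelSpace Ω]
  [Nonempty Ω] {μ : Measure Ω} [IsProbabilityMeasure μ] {f g : Ω → ℝ}

lemma indicator_bd (a : Set Ω) : ∃ C, ∀ x, ‖a.indicator (fun _ => (1:ℝ)) x‖ ≤ C := by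
  refine ⟨1, fun x => ?_⟩
  by_cases hx : x ∈ a <;> simp [Set.indicator, hx]

/-- Core identity from conditional independence. -/
lemma core_identity (h𝒢 : m𝒢 ≤ mΩ) (hf : Measurable[mΩ] f) (hg : Measurable[mΩ] g)
    (hCI : CondIndepFun m𝒢 h𝒢 f g μ) {a t w : Set Ω}
    (ha : MeasurableSet[MeasurableSpace.comap f inferInstance] a)
    (ht : MeasurableSet[MeasurableSpace.comap g inferInstance] t)
    (hw : MeasurableSet[m𝒢] w) :
    ∫ x in a ∩ w, (μ⟦t | m𝒢⟧) x ∂μ = (μ (a ∩ t ∩ w)).toReal := by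
  have hfact : (μ⟦a ∩ t | m𝒢⟧) =ᵐ[μ] (μ⟦a | m𝒢⟧) * (μ⟦t | m𝒢⟧) :=
    (condIndepFun_iff m𝒢 h𝒢 f g hf hg μ).mp hCI a t ha ht
  have hamΩ : MeasurableSet[mΩ] a := hf.comap_le _ ha
  have htmΩ : MeasurableSet[mΩ] t := hg.comap_le _ ht
  have hwmΩ : MeasurableSet[mΩ] w := h𝒢 _ hw
  have hint_a : Integrable (a.indicator fun _ => (1:ℝ)) μ := (integrable_const 1).indicator hamΩ
  have hint_mul : Integrable (fun x => a.indicator (fun _ => (1:ℝ)) x * (μ⟦t | m𝒢⟧) x) μ :=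
    Integrable.bdd_mul integrable_condExp (aestronglyMeasurable_const.indicator hamΩ)
      (Filter.Eventually.of_forall (indicator_bd a).choose_spec)
  have hmulcomm : (fun x => a.indicator (fun _ => (1:ℝ)) x * (μ⟦t | m𝒢⟧) x)
      = (μ⟦t | m𝒢⟧) * (a.indicator fun _ => (1:ℝ)) := funext fun x => mul_comm _ _
  have hpull : μ[fun x => a.indicator (fun _ => (1:ℝ)) x * (μ⟦t | m𝒢⟧) x | m𝒢]
      =ᵐ[μ] μ⟦a ∩ t | m𝒢⟧ := by
    rw [hmulcomm]
    refine (condExp_mul_of_stronglyMeasurable_left stronglyMeasurable_condExp (hmulcomm ▸ hint_mul)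
      hint_a).trans ?_
    refine Filter.EventuallyEq.trans ?_ hfact.symm
    exact Filter.Eventually.of_forall fun x => mul_comm _ _
  have hind : a.indicator (fun x => (μ⟦t | m𝒢⟧) x)
      = fun x => a.indicator (fun _ => (1:ℝ)) x * (μ⟦t | m𝒢⟧) x := indicator_eq_one_mul _ _
  calc ∫ x in a ∩ w, (μ⟦t | m𝒢⟧) x ∂μ
      = ∫ x in w ∩ a, (μ⟦t | m𝒢⟧) x ∂μ := by rw [Set.inter_comm]
    _ = ∫ x in w, a.indicator (fun x => (μ⟦t | m𝒢⟧) x) x ∂μ := (setIntegral_indicator hamΩ).symm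
    _ = ∫ x in w, (fun x => a.indicator (fun _ => (1:ℝ)) x * (μ⟦t | m𝒢⟧) x) x ∂μ := by
        rw [hind]
    _ = ∫ x in w, (μ[fun x => a.indicator (fun _ => (1:ℝ)) x * (μ⟦t | m𝒢⟧) x | m𝒢]) x ∂μ :=
        (setIntegral_condExp h𝒢 hint_mul hw).symm
    _ = ∫ x in w, (μ⟦a ∩ t | m𝒢⟧) x ∂μ :=
        setIntegral_congr_ae hwmΩ (hpull.mono fun x hx _ => hx)
    _ = ∫ x in w, ((a ∩ t).indicator fun _ => (1:ℝ)) x ∂μ :=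
        setIntegral_condExp h𝒢 ((integrable_const 1).indicator (hamΩ.inter htmΩ)) hw
    _ = ∫ _x in w ∩ (a ∩ t), (1:ℝ) ∂μ := setIntegral_indicator (hamΩ.inter htmΩ)
    _ = (μ (w ∩ (a ∩ t))).toReal := by simp [Measure.real]
    _ = (μ (a ∩ t ∩ w)).toReal := by rw [Set.inter_comm]

end Core

section Core2

variable {Ω : Type*} {m𝒢 : MeasurableSpace Ω} {mΩ : MeasurableSpace Ω} [StandardBorelSpace Ω]
  [Nonempty Ω] {μ : Measure Ω} [IsProbabilityMeasure μ] {f g : Ω → ℝ}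

/-- Self-adjointness of conditional expectation on indicators. -/
lemma setIntegral_condexp_indicator_comm (h𝒢 : m𝒢 ≤ mΩ) {A B : Set Ω}
    (hA : MeasurableSet[mΩ] A) (hB : MeasurableSet[mΩ] B) :
    ∫ x in A, (μ⟦B | m𝒢⟧) x ∂μ = ∫ x in B, (μ⟦A | m𝒢⟧) x ∂μ := by
  have key : ∀ {A B : Set Ω}, MeasurableSet[mΩ] A → MeasurableSet[mΩ] B →
      ∫ x in A, (μ⟦B | m𝒢⟧) x ∂μ = ∫ x, (μ⟦B | m𝒢⟧) x * (μ⟦A | m𝒢⟧) x ∂μ := by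
    intro A B hA hB
    have hint : Integrable (fun x => A.indicator (fun _ => (1:ℝ)) x * (μ⟦B | m𝒢⟧) x) μ :=
      Integrable.bdd_mul integrable_condExp (aestronglyMeasurable_const.indicator hA)
        (Filter.Eventually.of_forall (indicator_bd A).choose_spec)
    have hmc : (fun x => A.indicator (fun _ => (1:ℝ)) x * (μ⟦B | m𝒢⟧) x)
        = (μ⟦B | m𝒢⟧) * (A.indicator fun _ => (1:ℝ)) := funext fun x => mul_comm _ _
    have hind : A.indicator (fun x => (μ⟦B | m𝒢⟧) x)
        = fun x => A.indicator (fun _ => (1:ℝ)) x * (μ⟦B | m𝒢⟧) x := indicator_eq_one_mul _ _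
    calc ∫ x in A, (μ⟦B | m𝒢⟧) x ∂μ
        = ∫ x, A.indicator (fun x => (μ⟦B | m𝒢⟧) x) x ∂μ := (integral_indicator hA).symm
      _ = ∫ x, (fun x => A.indicator (fun _ => (1:ℝ)) x * (μ⟦B | m𝒢⟧) x) x ∂μ := by rw [hind]
      _ = ∫ x, (μ[fun x => A.indicator (fun _ => (1:ℝ)) x * (μ⟦B | m𝒢⟧) x | m𝒢]) x ∂μ :=
          (integral_condExp h𝒢).symm
      _ = ∫ x, (μ⟦B | m𝒢⟧) x * (μ⟦A | m𝒢⟧) x ∂μ := by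
          refine integral_congr_ae ?_
          rw [hmc]
          exact condExp_mul_of_stronglyMeasurable_left stronglyMeasurable_condExp (hmc ▸ hint)
            ((integrable_const 1).indicator hA)
  rw [key hA hB, key hB hA]
  exact integral_congr_ae (Filter.Eventually.of_forall fun x => mul_comm _ _)

/-- π-system induction: measure identity for all `s ∈ σ(f) ⊔ 𝒢`. -/
lemma setIntegral_condexp_inter (h𝒢 : m𝒢 ≤ mΩ) (hf : Measurable[mΩ] f) (hg : Measurable[mΩ] g)
    (hCI : CondIndepFun m𝒢 h𝒢 f g μ) {t u : Set Ω}
    (ht : MeasurableSet[MeasurableSpace.comap g inferInstance] t) (hu : MeasurableSet[m𝒢] u)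
    {s : Set Ω} (hs : MeasurableSet[MeasurableSpace.comap f inferInstance ⊔ m𝒢] s) :
    ∫ x in s, (μ⟦t ∩ u | m𝒢⟧) x ∂μ = (μ (s ∩ (t ∩ u))).toReal := by
  have htmΩ : MeasurableSet[mΩ] t := hg.comap_le _ ht
  have humΩ : MeasurableSet[mΩ] u := h𝒢 _ hu
  have htu : MeasurableSet[mΩ] (t ∩ u) := htmΩ.inter humΩ
  have hle_fG : MeasurableSpace.comap f inferInstance ⊔ m𝒢 ≤ mΩ := sup_le hf.comap_le h𝒢
  have hint_tu : Integrable ((t ∩ u).indicator fun _ => (1:ℝ)) μ :=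
    (integrable_const 1).indicator htu
  refine MeasurableSpace.induction_on_inter
    (m := MeasurableSpace.comap f inferInstance ⊔ m𝒢)
    (C := fun s _ => ∫ x in s, (μ⟦t ∩ u | m𝒢⟧) x ∂μ = (μ (s ∩ (t ∩ u))).toReal)
    (sup_eq_generateFrom_inter _ m𝒢) (isPiSystem_inter_alg _ m𝒢) (by simp) ?_ ?_ ?_ s hs
  · -- basic: s = a ∩ v
    rintro s ⟨a, ha, v, hv, rfl⟩
    have hamΩ : MeasurableSet[mΩ] a := hf.comap_le _ ha
    have hvmΩ : MeasurableSet[mΩ] v := h𝒢 _ hv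
    have hsplit : ((t ∩ u).indicator fun _ => (1:ℝ))
        = fun x => u.indicator (fun _ => (1:ℝ)) x * t.indicator (fun _ => (1:ℝ)) x := by
      funext x; by_cases hxt : x ∈ t <;> by_cases hxu : x ∈ u <;> simp [Set.indicator, hxt, hxu]
    have hpull : (μ⟦t ∩ u | m𝒢⟧)
        =ᵐ[μ] fun x => u.indicator (fun _ => (1:ℝ)) x * (μ⟦t | m𝒢⟧) x := by
      have h1 : (μ⟦t ∩ u | m𝒢⟧)
          = μ[(u.indicator fun _ => (1:ℝ)) * (t.indicator fun _ => (1:ℝ)) | m𝒢] := by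
        congr 1
      rw [h1]
      exact condExp_mul_of_stronglyMeasurable_left (stronglyMeasurable_const.indicator hu)
        (by rw [show ((u.indicator fun _ => (1:ℝ)) * (t.indicator fun _ => (1:ℝ)))
              = (t ∩ u).indicator fun _ => (1:ℝ) from by rw [hsplit]; rfl]; exact hint_tu)
        ((integrable_const 1).indicator htmΩ)
    have hind : u.indicator (fun x => (μ⟦t | m𝒢⟧) x)
        = fun x => u.indicator (fun _ => (1:ℝ)) x * (μ⟦t | m𝒢⟧) x := indicator_eq_one_mul _ _
    have hseteq : a ∩ t ∩ (v ∩ u) = a ∩ v ∩ (t ∩ u) := by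
      ext x; simp only [Set.mem_inter_iff]; tauto
    calc ∫ x in a ∩ v, (μ⟦t ∩ u | m𝒢⟧) x ∂μ
        = ∫ x in a ∩ v, (fun x => u.indicator (fun _ => (1:ℝ)) x * (μ⟦t | m𝒢⟧) x) x ∂μ :=
          setIntegral_congr_ae (hamΩ.inter hvmΩ) (hpull.mono fun x hx _ => hx)
      _ = ∫ x in a ∩ v, u.indicator (fun x => (μ⟦t | m𝒢⟧) x) x ∂μ := by rw [hind]
      _ = ∫ x in a ∩ v ∩ u, (μ⟦t | m𝒢⟧) x ∂μ := setIntegral_indicator humΩ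
      _ = ∫ x in a ∩ (v ∩ u), (μ⟦t | m𝒢⟧) x ∂μ := by rw [Set.inter_assoc]
      _ = (μ (a ∩ t ∩ (v ∩ u))).toReal := core_identity h𝒢 hf hg hCI ha ht (hv.inter hu)
      _ = (μ (a ∩ v ∩ (t ∩ u))).toReal := by rw [hseteq]
  · -- compl
    intro s hsm ih
    have hsmΩ : MeasurableSet[mΩ] s := hle_fG _ hsm
    have htot : ∫ x in s, (μ⟦t ∩ u | m𝒢⟧) x ∂μ + ∫ x in sᶜ, (μ⟦t ∩ u | m𝒢⟧) x ∂μ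
        = (μ (t ∩ u)).toReal := by
      rw [integral_add_compl hsmΩ integrable_condExp, integral_condExp h𝒢,
        integral_indicator htu]
      simp [Measure.real]
    have hmeas : μ ((t ∩ u) ∩ s) + μ ((t ∩ u) \ s) = μ (t ∩ u) := measure_inter_add_diff _ hsmΩ
    have h2 := congrArg ENNReal.toReal hmeas
    rw [ENNReal.toReal_add (measure_ne_top μ _) (measure_ne_top μ _)] at h2
    have e1 : (t ∩ u) ∩ s = s ∩ (t ∩ u) := Set.inter_comm _ _
    have e2 : (t ∩ u) \ s = sᶜ ∩ (t ∩ u) := by rw [Set.diff_eq, Set.inter_comm]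
    rw [e1, e2] at h2
    rw [ih] at htot
    linarith
  · -- disjoint union
    intro s hdisj hsm ih
    have hsmΩ : ∀ n, MeasurableSet[mΩ] (s n) := fun n => hle_fG _ (hsm n)
    rw [integral_iUnion hsmΩ hdisj integrable_condExp.integrableOn]
    rw [Set.iUnion_inter, measure_iUnion
      (hdisj.mono fun m n hmn => hmn.mono Set.inter_subset_left Set.inter_subset_left)
      (fun n => (hsmΩ n).inter htu)]
    rw [ENNReal.tsum_toReal_eq fun n => measure_ne_top μ _]
    exact tsum_congr ih

end Core2

section Core3

variable {Ω : Type*} {m𝒢 : MeasurableSpace Ω} {mΩ : MeasurableSpace Ω} [StandardBorelSpace Ω]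
  [Nonempty Ω] {μ : Measure Ω} [IsProbabilityMeasure μ] {f g : Ω → ℝ}

/-- If `f ⟂ g | 𝒢` then conditioning on `σ(g) ⊔ 𝒢` is the same as conditioning on `𝒢`,
for functions measurable w.r.t. `σ(f) ⊔ 𝒢`. -/
theorem condexp_of_condIndepFun (h𝒢 : m𝒢 ≤ mΩ) (hf : Measurable[mΩ] f) (hg : Measurable[mΩ] g)
    (hCI : CondIndepFun m𝒢 h𝒢 f g μ) {h : Ω → ℝ}
    (hh_meas : StronglyMeasurable[MeasurableSpace.comap f inferInstance ⊔ m𝒢] h)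
    (hh_int : Integrable h μ) :
    μ[h | MeasurableSpace.comap g inferInstance ⊔ m𝒢] =ᵐ[μ] μ[h | m𝒢] := by
  have hle_fG : MeasurableSpace.comap f inferInstance ⊔ m𝒢 ≤ mΩ := sup_le hf.comap_le h𝒢
  have hle_gG : MeasurableSpace.comap g inferInstance ⊔ m𝒢 ≤ mΩ := sup_le hg.comap_le h𝒢
  have step1 : ∀ t u : Set Ω, MeasurableSet[MeasurableSpace.comap g inferInstance] t →
      MeasurableSet[m𝒢] u →
      ∫ x in t ∩ u, h x ∂μ = ∫ x in t ∩ u, (μ[h | m𝒢]) x ∂μ := by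
    intro t u ht hu
    have htu : MeasurableSet[mΩ] (t ∩ u) := (hg.comap_le _ ht).inter (h𝒢 _ hu)
    refine MemLp.induction_stronglyMeasurable hle_fG ENNReal.one_ne_top
      (fun φ : Ω → ℝ => ∫ x in t ∩ u, φ x ∂μ = ∫ x in t ∩ u, (μ[φ | m𝒢]) x ∂μ)
      ?_ ?_ ?_ ?_ (memLp_one_iff_integrable.mpr hh_int) hh_meas.aestronglyMeasurable
    · -- indicators
      intro c s hs hμs
      have hsmΩ : MeasurableSet[mΩ] s := hle_fG _ hs
      have hconst : s.indicator (fun _ => c) = c • s.indicator (fun _ => (1:ℝ)) := by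
        funext x; by_cases hx : x ∈ s <;> simp [Set.indicator, hx]
      have hRHS : ∫ x in t ∩ u, (μ[s.indicator (fun _ => c) | m𝒢]) x ∂μ
          = c * ∫ x in t ∩ u, (μ⟦s | m𝒢⟧) x ∂μ := by
        rw [hconst, setIntegral_congr_ae htu (((condExp_smul c
          (s.indicator (fun _ => (1:ℝ))) m𝒢) : _).mono fun x hx _ => hx)]
        simp only [Pi.smul_apply, smul_eq_mul]
        rw [integral_const_mul]
      rw [hRHS, setIntegral_condexp_indicator_comm h𝒢 htu hsmΩ,
        setIntegral_condexp_inter h𝒢 hf hg hCI ht hu hs,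
        setIntegral_indicator hsmΩ, setIntegral_const, Set.inter_comm (t ∩ u) s,
        smul_eq_mul, mul_comm]
      rfl
    · -- additivity
      intro φ ψ hdisj hφ hψ hφm hψm hPφ hPψ
      have hφi := memLp_one_iff_integrable.mp hφ
      have hψi := memLp_one_iff_integrable.mp hψ
      have hadd : ∫ x in t ∩ u, (μ[φ + ψ | m𝒢]) x ∂μ
          = ∫ x in t ∩ u, (μ[φ | m𝒢]) x ∂μ + ∫ x in t ∩ u, (μ[ψ | m𝒢]) x ∂μ := by
        rw [setIntegral_congr_ae htu ((condExp_add hφi hψi m𝒢).mono fun x hx _ => hx)]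
        exact integral_add integrable_condExp.integrableOn integrable_condExp.integrableOn
      rw [hadd, ← hPφ, ← hPψ]
      exact integral_add hφi.integrableOn hψi.integrableOn
    · -- closedness
      have hcont1 : Continuous fun q : lpMeas ℝ ℝ (MeasurableSpace.comap f inferInstance ⊔ m𝒢) 1 μ =>
          ∫ x in t ∩ u, (q : Ω → ℝ) x ∂μ := by
        have heq : (fun q : lpMeas ℝ ℝ (MeasurableSpace.comap f inferInstance ⊔ m𝒢) 1 μ =>
            ∫ x in t ∩ u, (q : Ω → ℝ) x ∂μ)
            = (fun q : Lp ℝ 1 μ => ∫ x in t ∩ u, q x ∂μ) ∘ Submodule.subtypeL _ := by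
          refine funext fun q => integral_congr_ae (ae_restrict_of_ae ?_)
          simp_rw [Submodule.coe_subtypeL', Submodule.coe_subtype]
          exact Filter.Eventually.of_forall fun x => by norm_cast
        rw [heq]
        exact (continuous_setIntegral _).comp (ContinuousLinearMap.continuous _)
      have hcont2 : Continuous fun q : lpMeas ℝ ℝ (MeasurableSpace.comap f inferInstance ⊔ m𝒢) 1 μ =>
          ∫ x in t ∩ u, (condExpL1CLM ℝ h𝒢 μ (Submodule.subtypeL _ q) : Ω → ℝ) x ∂μ :=
        (continuous_setIntegral _).comp ((condExpL1CLM ℝ h𝒢 μ).continuous.comp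
          (ContinuousLinearMap.continuous _))
      have hset : {q : lpMeas ℝ ℝ (MeasurableSpace.comap f inferInstance ⊔ m𝒢) 1 μ |
            ∫ x in t ∩ u, (q : Ω → ℝ) x ∂μ = ∫ x in t ∩ u, (μ[(q : Ω → ℝ) | m𝒢]) x ∂μ}
          = {q : lpMeas ℝ ℝ (MeasurableSpace.comap f inferInstance ⊔ m𝒢) 1 μ |
            ∫ x in t ∩ u, (q : Ω → ℝ) x ∂μ
              = ∫ x in t ∩ u, (condExpL1CLM ℝ h𝒢 μ (Submodule.subtypeL _ q) : Ω → ℝ) x ∂μ} := by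
        ext q
        have hq : Integrable (q : Ω → ℝ) μ := L1.integrable_coeFn _
        have hae : μ[(q : Ω → ℝ) | m𝒢]
            =ᵐ[μ] (condExpL1CLM ℝ h𝒢 μ (Submodule.subtypeL _ q) : Ω → ℝ) := by
          refine (condExp_ae_eq_condExpL1 h𝒢 _).trans ?_
          rw [condExpL1_eq hq, Integrable.toL1_coeFn _ hq]
          exact Filter.EventuallyEq.rfl
        have h2 : ∫ x in t ∩ u, (μ[(q : Ω → ℝ) | m𝒢]) x ∂μ
            = ∫ x in t ∩ u, (condExpL1CLM ℝ h𝒢 μ (Submodule.subtypeL _ q) : Ω → ℝ) x ∂μ :=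
          setIntegral_congr_ae htu (hae.mono fun x hx _ => hx)
        simp only [Set.mem_setOf_eq, h2]
      rw [hset]
      exact isClosed_eq hcont1 hcont2
    · -- a.e. congruence
      intro φ ψ hφψ hφ hPφ
      have h1 : ∫ x in t ∩ u, ψ x ∂μ = ∫ x in t ∩ u, φ x ∂μ :=
        setIntegral_congr_ae htu (hφψ.symm.mono fun x hx _ => hx)
      have h2 : ∫ x in t ∩ u, (μ[ψ | m𝒢]) x ∂μ = ∫ x in t ∩ u, (μ[φ | m𝒢]) x ∂μ :=
        setIntegral_congr_ae htu ((condExp_congr_ae hφψ.symm).mono fun x hx _ => hx)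
      rw [h1, h2]; exact hPφ
  have step2 : ∀ s : Set Ω, MeasurableSet[MeasurableSpace.comap g inferInstance ⊔ m𝒢] s →
      ∫ x in s, (μ[h | m𝒢]) x ∂μ = ∫ x in s, h x ∂μ := by
    intro s hs
    refine MeasurableSpace.induction_on_inter
      (m := MeasurableSpace.comap g inferInstance ⊔ m𝒢)
      (C := fun s _ => ∫ x in s, (μ[h | m𝒢]) x ∂μ = ∫ x in s, h x ∂μ)
      (sup_eq_generateFrom_inter _ m𝒢) (isPiSystem_inter_alg _ m𝒢) (by simp) ?_ ?_ ?_ s hs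
    · rintro s ⟨t, ht, u, hu, rfl⟩
      exact (step1 t u ht hu).symm
    · intro s hsm ih
      have hsmΩ : MeasurableSet[mΩ] s := hle_gG _ hsm
      have h1 := integral_add_compl hsmΩ (integrable_condExp : Integrable (μ[h | m𝒢]) μ)
      have h2 := integral_add_compl hsmΩ hh_int
      have h3 : ∫ x, (μ[h | m𝒢]) x ∂μ = ∫ x, h x ∂μ := integral_condExp h𝒢
      linarith
    · intro s hdisj hsm ih
      have hsmΩ : ∀ n, MeasurableSet[mΩ] (s n) := fun n => hle_gG _ (hsm n)
      rw [integral_iUnion hsmΩ hdisj integrable_condExp.integrableOn,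
        integral_iUnion hsmΩ hdisj hh_int.integrableOn]
      exact tsum_congr ih
  exact (ae_eq_condExp_of_forall_setIntegral_eq hle_gG hh_int
    (fun s _ _ => integrable_condExp.integrableOn)
    (fun s hs _ => step2 s hs)
    (StronglyMeasurable.aestronglyMeasurable (m := MeasurableSpace.comap g inferInstance ⊔ m𝒢) (μ := μ)
      (stronglyMeasurable_condExp.mono le_sup_right))).symm

end Core3

/-- Corollary 1: In an HCM satisfying the stable-normality assumption
(for `C ⊆ nd_i`, the standardized residual of `X_i` given `X_C` is standard normal iff
`pa_i ⊆ C`), for every parent `j ∈ pa_i`, `X_i` is NOT conditionally independent of `X_j`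
given `X_{pa_i \ {j}}`. -/
theorem stmt_1 {Ω : Type*} {mΩ : MeasurableSpace Ω} [StandardBorelSpace Ω] [Nonempty Ω]
    (μ : Measure Ω) [IsProbabilityMeasure μ]
    {d : ℕ} (Edge : Fin d → Fin d → Prop)
    (hacyclic : ∀ i : Fin d, ¬ Relation.TransGen Edge i i)
    (X : Fin d → Ω → ℝ)
    (hX : ∀ i, Measurable (X i))
    (hle : ∀ S : Set (Fin d), condAlg X S ≤ mΩ)
    (hstable : ∀ (i : Fin d) (C : Set (Fin d)),
      C ⊆ {j : Fin d | ¬ Relation.ReflTransGen Edge i j} →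
      (Measure.map (stdResid μ X i C) μ = gaussianReal 0 1 ↔ {j | Edge j i} ⊆ C)) :
    ∀ i j : Fin d, Edge j i →
      ¬ CondIndepFun (condAlg X ({k | Edge k i} \ {j})) (hle _) (X i) (X j) μ := by
  intro i j hij hCI
  set pa := {k : Fin d | Edge k i} with hpa_def
  have hpa_nd : pa ⊆ {k : Fin d | ¬ Relation.ReflTransGen Edge i k} :=
    fun k hk hrt => hacyclic i (Relation.TransGen.tail' hrt hk)
  have hC'_nd : pa \ {j} ⊆ {k : Fin d | ¬ Relation.ReflTransGen Edge i k} :=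
    fun k hk => hpa_nd hk.1
  have hsup : condAlg X pa
      = MeasurableSpace.comap (X j) inferInstance ⊔ condAlg X (pa \ {j}) := by
    rw [condAlg_split X (show j ∈ pa from hij), sup_comm]
  have h𝒢 : condAlg X (pa \ {j}) ≤ mΩ := hle _
  have key : ∀ φ : Ω → ℝ,
      StronglyMeasurable[MeasurableSpace.comap (X i) inferInstance ⊔ condAlg X (pa \ {j})] φ →
      μ[φ | condAlg X pa] =ᵐ[μ] μ[φ | condAlg X (pa \ {j})] := by
    intro φ hφm
    by_cases hφi : Integrable φ μ
    · rw [hsup]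
      exact condexp_of_condIndepFun h𝒢 (hX i) (hX j) hCI hφm hφi
    · rw [condExp_of_not_integrable hφi, condExp_of_not_integrable hφi]
  have hXi_meas : StronglyMeasurable[MeasurableSpace.comap (X i) inferInstance
      ⊔ condAlg X (pa \ {j})] (X i) :=
    (Measurable.stronglyMeasurable
      ((@measurable_iff_comap_le Ω ℝ (MeasurableSpace.comap (X i) inferInstance) _ (X i)).mpr
        le_rfl)).mono le_sup_left
  have E1 : μ[X i | condAlg X pa] =ᵐ[μ] μ[X i | condAlg X (pa \ {j})] := key (X i) hXi_meas
  have hsqm : StronglyMeasurable[MeasurableSpace.comap (X i) inferInstance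
      ⊔ condAlg X (pa \ {j})]
      (fun ω' => (X i ω' - (μ[X i | condAlg X (pa \ {j})]) ω') ^ 2) := by
    have hsub : StronglyMeasurable[MeasurableSpace.comap (X i) inferInstance
        ⊔ condAlg X (pa \ {j})]
        (fun ω' => X i ω' - (μ[X i | condAlg X (pa \ {j})]) ω') :=
      hXi_meas.sub (stronglyMeasurable_condExp.mono le_sup_right)
    simp only [pow_two]
    exact hsub.mul hsub
  have E2 : μ[fun ω' => (X i ω' - (μ[X i | condAlg X (pa \ {j})]) ω') ^ 2 | condAlg X pa]
      =ᵐ[μ] μ[fun ω' => (X i ω' - (μ[X i | condAlg X (pa \ {j})]) ω') ^ 2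
        | condAlg X (pa \ {j})] := key _ hsqm
  have E3 : μ[fun ω' => (X i ω' - (μ[X i | condAlg X pa]) ω') ^ 2 | condAlg X pa]
      =ᵐ[μ] μ[fun ω' => (X i ω' - (μ[X i | condAlg X (pa \ {j})]) ω') ^ 2 | condAlg X pa] := by
    refine condExp_congr_ae (E1.mono fun ω hω => ?_)
    simp only []
    rw [hω]
  have hstd : stdResid μ X i pa =ᵐ[μ] stdResid μ X i (pa \ {j}) := by
    filter_upwards [E1, E2, E3] with ω h1 h2 h3
    simp only [stdResid]
    rw [h1, h3, h2]
  have hg1 : Measure.map (stdResid μ X i pa) μ = gaussianReal 0 1 :=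
    (hstable i pa hpa_nd).mpr fun k hk => hk
  rw [Measure.map_congr hstd] at hg1
  have hsub := (hstable i (pa \ {j}) hC'_nd).mp hg1
  exact (hsub hij).2 rfl
end

section
/- Under the stable-normality assumption and the faithfulness consequence, the DAG of an HCM is uniquely identifiable from the joint distribution P_X: any two DAGs G, G' each satisfying the HCM assumptions and consistent with the same P_X must be equal. -/
open MeasureTheory ProbabilityTheory

/-- If `S` is closed under taking parents (ancestral) for the edge relation `E`, then any
ancestor of an element of `S` is itself in `S`. -/
lemma ancestral_mem_of_reflTransGen {d : ℕ} {E : Fin d → Fin d → Prop} {S : Finset (Fin d)}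
    (hanc : ∀ j ∈ S, ∀ k, E k j → k ∈ S) {i j : Fin d}
    (h : Relation.ReflTransGen E i j) : j ∈ S → i ∈ S := by
  induction h with
  | refl => exact id
  | tail _ hE ih => exact fun hc => ih (hanc _ hc _ hE)

/-- Identifiability of HCMs: Under the stable-normality assumption and the
faithfulness consequence (together with the causal Markov condition expressing consistency
with `P_X`), the DAG of an HCM is uniquely identifiable from the joint distribution: any two
DAGs `Edge₁`, `Edge₂`, each satisfying the HCM assumptions and consistent with the same joint
distribution of `X` under `μ`, must be equal. -/
theorem stmt_7 {Ω : Type*} {mΩ : MeasurableSpace Ω} [StandardBorelSpace Ω] [Nonempty Ω]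
    (μ : Measure Ω) [IsProbabilityMeasure μ]
    {d : ℕ} (Edge₁ Edge₂ : Fin d → Fin d → Prop)
    (X : Fin d → Ω → ℝ)
    (hX : ∀ i, Measurable (X i))
    (hle : ∀ S : Set (Fin d), condAlg X S ≤ mΩ)
    (hacyclic₁ : ∀ i : Fin d, ¬ Relation.TransGen Edge₁ i i)
    (hacyclic₂ : ∀ i : Fin d, ¬ Relation.TransGen Edge₂ i i)
    (hstable₁ : ∀ (i : Fin d) (C : Set (Fin d)),
      C ⊆ {j : Fin d | ¬ Relation.ReflTransGen Edge₁ i j} →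
      (Measure.map (stdResid μ X i C) μ = gaussianReal 0 1 ↔ {j | Edge₁ j i} ⊆ C))
    (hstable₂ : ∀ (i : Fin d) (C : Set (Fin d)),
      C ⊆ {j : Fin d | ¬ Relation.ReflTransGen Edge₂ i j} →
      (Measure.map (stdResid μ X i C) μ = gaussianReal 0 1 ↔ {j | Edge₂ j i} ⊆ C))
    (hMarkov₁ : ∀ i : Fin d,
      CondIndepFun (condAlg X {j | Edge₁ j i}) (hle _) (X i)
        (fun ω => fun j : ↥({j : Fin d | ¬ Relation.ReflTransGen Edge₁ i j} \ {j | Edge₁ j i}) =>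
          X j.1 ω) μ)
    (hMarkov₂ : ∀ i : Fin d,
      CondIndepFun (condAlg X {j | Edge₂ j i}) (hle _) (X i)
        (fun ω => fun j : ↥({j : Fin d | ¬ Relation.ReflTransGen Edge₂ i j} \ {j | Edge₂ j i}) =>
          X j.1 ω) μ)
    (hfaithful₁ : ∀ i j : Fin d, Edge₁ j i →
      ¬ CondIndepFun (condAlg X ({k | Edge₁ k i} \ {j})) (hle _) (X i) (X j) μ)
    (hfaithful₂ : ∀ i j : Fin d, Edge₂ j i →
      ¬ CondIndepFun (condAlg X ({k | Edge₂ k i} \ {j})) (hle _) (X i) (X j) μ) :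
    Edge₁ = Edge₂ := by
  classical
  -- parents are non-descendants
  have hpa_nd₁ : ∀ i : Fin d, {j | Edge₁ j i} ⊆ {j | ¬ Relation.ReflTransGen Edge₁ i j} := by
    intro i j hj hr
    exact hacyclic₁ i (Relation.TransGen.tail' hr hj)
  have hpa_nd₂ : ∀ i : Fin d, {j | Edge₂ j i} ⊆ {j | ¬ Relation.ReflTransGen Edge₂ i j} := by
    intro i j hj hr
    exact hacyclic₂ i (Relation.TransGen.tail' hr hj)
  -- notation: ancestral sets
  set anc₁ : Finset (Fin d) → Prop := fun S => ∀ j ∈ S, ∀ k, Edge₁ k j → k ∈ S with hanc₁def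
  set anc₂ : Finset (Fin d) → Prop := fun S => ∀ j ∈ S, ∀ k, Edge₂ k j → k ∈ S with hanc₂def
  -- If `S` is ancestral for both graphs, `i ∉ S`, and the `G₁`-parents of `i` lie in `S`,
  -- then the `G₂`-parents of `i` lie in `S` as well (via stable normality in both graphs).
  have step : ∀ (S : Finset (Fin d)), anc₁ S → anc₂ S → ∀ i ∉ S,
      {j | Edge₁ j i} ⊆ ↑S → {j | Edge₂ j i} ⊆ ↑S := by
    intro S h1 h2 i hiS hpa
    have hnd₁ : (↑S : Set (Fin d)) ⊆ {j | ¬ Relation.ReflTransGen Edge₁ i j} := by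
      intro j hj hr
      exact hiS (ancestral_mem_of_reflTransGen h1 hr hj)
    have hnd₂ : (↑S : Set (Fin d)) ⊆ {j | ¬ Relation.ReflTransGen Edge₂ i j} := by
      intro j hj hr
      exact hiS (ancestral_mem_of_reflTransGen h2 hr hj)
    have hg : Measure.map (stdResid μ X i ↑S) μ = gaussianReal 0 1 :=
      (hstable₁ i ↑S hnd₁).mpr hpa
    exact (hstable₂ i ↑S hnd₂).mp hg
  -- Well-foundedness of the strict ancestor relation of `G₁`.
  have irr : IsIrrefl (Fin d) (Relation.TransGen Edge₁) := ⟨hacyclic₁⟩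
  have wf : WellFounded (Relation.TransGen Edge₁) :=
    Finite.wellFounded_of_trans_of_irrefl _
  -- Build a set that is ancestral for both graphs, avoids `i`, and contains the `G₁`-parents
  -- of `i`.
  have build : ∀ (n : ℕ) (S : Finset (Fin d)), (Finset.univ \ S).card ≤ n →
      anc₁ S → anc₂ S → ∀ i ∉ S,
      ∃ T : Finset (Fin d), anc₁ T ∧ anc₂ T ∧ i ∉ T ∧ {j | Edge₁ j i} ⊆ ↑T := by
    intro n
    induction n with
    | zero =>
      intro S hcard _ _ i hiS
      exact absurd (Finset.eq_univ_of_card _ (le_antisymm (Finset.card_le_univ S)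
        (by
          have h := Finset.card_sdiff_add_card_eq_card (Finset.subset_univ S)
          rw [Finset.card_univ] at h
          omega)) ▸ Finset.mem_univ i) hiS
    | succ n ih =>
      intro S hcard h1 h2 i hiS
      by_cases hpa : {j | Edge₁ j i} ⊆ ↑S
      · exact ⟨S, h1, h2, hiS, hpa⟩
      · -- pick a `G₁`-minimal element outside `S`
        obtain ⟨k, hkA, hkmin⟩ := wf.has_min {x | x ∉ S} ⟨i, hiS⟩
        have hkpa : {j | Edge₁ j k} ⊆ ↑S := by
          intro j hj
          by_contra hjS
          exact hkmin j hjS (Relation.TransGen.single hj)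
        have hki : k ≠ i := fun h => hpa (h ▸ hkpa)
        have hkpa₂ : {j | Edge₂ j k} ⊆ ↑S := step S h1 h2 k hkA hkpa
        have h1' : anc₁ (insert k S) := by
          intro j hj l hl
          rcases Finset.mem_insert.mp hj with h | h
          · exact Finset.mem_insert_of_mem (hkpa (h ▸ hl))
          · exact Finset.mem_insert_of_mem (h1 j h l hl)
        have h2' : anc₂ (insert k S) := by
          intro j hj l hl
          rcases Finset.mem_insert.mp hj with h | h
          · exact Finset.mem_insert_of_mem (hkpa₂ (h ▸ hl))
          · exact Finset.mem_insert_of_mem (h2 j h l hl)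
        have hcard' : (Finset.univ \ insert k S).card ≤ n := by
          have hsub : Finset.univ \ insert k S ⊆ (Finset.univ \ S).erase k := by
            intro x hx
            rcases Finset.mem_sdiff.mp hx with ⟨hxu, hxm⟩
            exact Finset.mem_erase.mpr ⟨fun h => hxm (h ▸ Finset.mem_insert_self k S),
              Finset.mem_sdiff.mpr ⟨hxu, fun h => hxm (Finset.mem_insert_of_mem h)⟩⟩
          have hkmem : k ∈ Finset.univ \ S := Finset.mem_sdiff.mpr ⟨Finset.mem_univ k, hkA⟩
          calc (Finset.univ \ insert k S).card ≤ ((Finset.univ \ S).erase k).card :=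
                Finset.card_le_card hsub
            _ = (Finset.univ \ S).card - 1 := Finset.card_erase_of_mem hkmem
            _ ≤ n := by
                have : 1 ≤ (Finset.univ \ S).card := Finset.card_pos.mpr ⟨k, hkmem⟩
                omega
        exact ih (insert k S) hcard' h1' h2' i
          (fun h => hki ((Finset.mem_insert.mp h).resolve_right hiS).symm)
  -- parent sets coincide
  have hpaeq : ∀ i : Fin d, {j | Edge₁ j i} = {j | Edge₂ j i} := by
    intro i
    obtain ⟨T, h1, h2, hiT, hpaT⟩ :=
      build (Finset.univ \ (∅ : Finset (Fin d))).card ∅ le_rfl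
        (by intro j hj; exact absurd hj (Finset.notMem_empty j))
        (by intro j hj; exact absurd hj (Finset.notMem_empty j))
        i (Finset.notMem_empty i)
    have hTnd₂ : (↑T : Set (Fin d)) ⊆ {j | ¬ Relation.ReflTransGen Edge₂ i j} := by
      intro j hj hr
      exact hiT (ancestral_mem_of_reflTransGen h2 hr hj)
    have hTnd₁ : (↑T : Set (Fin d)) ⊆ {j | ¬ Relation.ReflTransGen Edge₁ i j} := by
      intro j hj hr
      exact hiT (ancestral_mem_of_reflTransGen h1 hr hj)
    -- use C = parents₁(i)
    have hC₁ : {j | Edge₁ j i} ⊆ {j | ¬ Relation.ReflTransGen Edge₂ i j} :=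
      fun j hj => hTnd₂ (hpaT hj)
    have hg₁ : Measure.map (stdResid μ X i {j | Edge₁ j i}) μ = gaussianReal 0 1 :=
      (hstable₁ i _ (hpa_nd₁ i)).mpr subset_rfl
    have h21 : {j | Edge₂ j i} ⊆ {j | Edge₁ j i} :=
      (hstable₂ i _ hC₁).mp hg₁
    -- use C = parents₂(i)
    have hC₂ : {j | Edge₂ j i} ⊆ {j | ¬ Relation.ReflTransGen Edge₁ i j} :=
      fun j hj => hTnd₁ (hpaT (h21 hj))
    have hg₂ : Measure.map (stdResid μ X i {j | Edge₂ j i}) μ = gaussianReal 0 1 :=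
      (hstable₂ i _ (hpa_nd₂ i)).mpr subset_rfl
    have h12 : {j | Edge₁ j i} ⊆ {j | Edge₂ j i} :=
      (hstable₁ i _ hC₂).mp hg₂
    exact Set.Subset.antisymm h12 h21
  funext j i
  have := Set.ext_iff.mp (hpaeq i) j
  exact propext this
end

section
/- Let C ⊆ nd_i with pa_i ⊆ C in an HCM. Then E[X_i | X_C] = μ_i(X_pa_i) and Var[X_i | X_C] = σ_i(X_pa_i)² almost surely, and consequently the residual (X_i − E[X_i|X_C])/sqrt(Var[X_i|X_C]) = E_i is standard normal and independent of X_C. -/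
open MeasureTheory ProbabilityTheory

section
open Real

noncomputable section

namespace Stmt18Aux

lemma integrable_e : Integrable (fun x : ℝ => rexp (-(1/2 : ℝ) * x ^ 2)) :=
  integrable_exp_neg_mul_sq (by norm_num)

lemma integrable_mul_e : Integrable (fun x : ℝ => x * rexp (-(1/2 : ℝ) * x ^ 2)) :=
  integrable_mul_exp_neg_mul_sq (by norm_num)

lemma integrable_sq_mul_e : Integrable (fun x : ℝ => x ^ 2 * rexp (-(1/2 : ℝ) * x ^ 2)) := by
  have h := integrable_rpow_mul_exp_neg_mul_sq (b := 1/2) (by norm_num) (s := 2) (by norm_num)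
  have : (fun x : ℝ => x ^ (2:ℝ) * rexp (-(1/2 : ℝ) * x ^ 2))
      = fun x : ℝ => x ^ 2 * rexp (-(1/2 : ℝ) * x ^ 2) := by
    funext x
    rw [show (2:ℝ) = ((2:ℕ):ℝ) by norm_num, Real.rpow_natCast]
  rwa [this] at h

lemma hasDerivAt_e (x : ℝ) :
    HasDerivAt (fun x : ℝ => rexp (-(1/2 : ℝ) * x ^ 2)) (-x * rexp (-(1/2 : ℝ) * x ^ 2)) x := by
  have h := (((hasDerivAt_pow 2 x).const_mul (-(1/2 : ℝ))).exp)
  convert h using 1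
  ring

lemma integral_mul_e : ∫ x : ℝ, x * rexp (-(1/2 : ℝ) * x ^ 2) = 0 := by
  refine integral_eq_zero_of_hasDerivAt_of_integrable
    (f := fun x : ℝ => -rexp (-(1/2 : ℝ) * x ^ 2)) (fun x => ?_) integrable_mul_e
    integrable_e.neg
  have h := (hasDerivAt_e x).neg
  convert h using 1
  · rfl
  · ring

lemma integral_sq_mul_e :
    ∫ x : ℝ, x ^ 2 * rexp (-(1/2 : ℝ) * x ^ 2) = ∫ x : ℝ, rexp (-(1/2 : ℝ) * x ^ 2) := by
  have h0 : ∫ x : ℝ, (x ^ 2 * rexp (-(1/2 : ℝ) * x ^ 2) - rexp (-(1/2 : ℝ) * x ^ 2)) = 0 := by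
    refine integral_eq_zero_of_hasDerivAt_of_integrable
      (f := fun x : ℝ => -(x * rexp (-(1/2 : ℝ) * x ^ 2))) (fun x => ?_)
      (integrable_sq_mul_e.sub integrable_e) integrable_mul_e.neg
    have h := ((hasDerivAt_id x).mul (hasDerivAt_e x)).neg
    convert h using 1
    · rfl
    · simp only [id_eq]
      ring
  rw [integral_sub integrable_sq_mul_e integrable_e] at h0
  linarith

lemma integral_e : ∫ x : ℝ, rexp (-(1/2 : ℝ) * x ^ 2) = Real.sqrt (2 * π) := by
  have h := integral_gaussian (1/2)
  rw [show π / (1/2 : ℝ) = 2 * π by ring] at h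
  simpa using h

lemma pdf_eq (x : ℝ) :
    gaussianPDFReal 0 1 x = (Real.sqrt (2 * π))⁻¹ * rexp (-(1/2 : ℝ) * x ^ 2) := by
  simp only [gaussianPDFReal, NNReal.coe_one, mul_one, sub_zero]
  congr 1
  ring


lemma integral_gauss (g : ℝ → ℝ) :
    ∫ x, g x ∂(gaussianReal 0 1) = ∫ x, gaussianPDFReal 0 1 x * g x := by
  rw [gaussianReal_of_var_ne_zero 0 one_ne_zero,
    show gaussianPDF 0 1 = fun x => ((gaussianPDFReal 0 1 x).toNNReal : ENNReal)
      from rfl,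
    integral_withDensity_eq_integral_smul ((measurable_gaussianPDFReal 0 1).real_toNNReal) g]
  congr 1
  funext x
  rw [NNReal.smul_def, Real.coe_toNNReal _ (gaussianPDFReal_nonneg 0 1 x), smul_eq_mul]

lemma integrable_gauss {g : ℝ → ℝ}
    (hg : Integrable (fun x => g x * gaussianPDFReal 0 1 x)) :
    Integrable g (gaussianReal 0 1) := by
  rw [gaussianReal_of_var_ne_zero 0 one_ne_zero,
    integrable_withDensity_iff (measurable_gaussianPDF 0 1)
      (Filter.Eventually.of_forall fun x => ENNReal.ofReal_lt_top)]
  refine hg.congr (Filter.Eventually.of_forall fun x => ?_)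
  simp only [gaussianPDF_def]
  rw [ENNReal.toReal_ofReal (gaussianPDFReal_nonneg 0 1 x)]

lemma integrable_id_gauss : Integrable (fun x : ℝ => x) (gaussianReal 0 1) := by
  refine integrable_gauss ?_
  have h := integrable_mul_e.const_mul (Real.sqrt (2 * π))⁻¹
  refine h.congr (Filter.Eventually.of_forall fun x => ?_)
  simp only [pdf_eq]
  ring

lemma integrable_sq_gauss : Integrable (fun x : ℝ => x ^ 2) (gaussianReal 0 1) := by
  refine integrable_gauss ?_
  have h := integrable_sq_mul_e.const_mul (Real.sqrt (2 * π))⁻¹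
  refine h.congr (Filter.Eventually.of_forall fun x => ?_)
  simp only [pdf_eq]
  ring

lemma mean_gauss : ∫ x, x ∂(gaussianReal 0 1) = 0 := by
  rw [integral_gauss]
  have : (fun x : ℝ => gaussianPDFReal 0 1 x * x)
      = fun x : ℝ => (Real.sqrt (2 * π))⁻¹ * (x * rexp (-(1/2 : ℝ) * x ^ 2)) := by
    funext x; rw [pdf_eq]; ring
  rw [this, integral_const_mul, integral_mul_e, mul_zero]

lemma moment2_gauss : ∫ x, x ^ 2 ∂(gaussianReal 0 1) = 1 := by
  rw [integral_gauss]
  have : (fun x : ℝ => gaussianPDFReal 0 1 x * x ^ 2)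
      = fun x : ℝ => (Real.sqrt (2 * π))⁻¹ * (x ^ 2 * rexp (-(1/2 : ℝ) * x ^ 2)) := by
    funext x; rw [pdf_eq]; ring
  rw [this, integral_const_mul, integral_sq_mul_e, integral_e,
    inv_mul_cancel₀ (Real.sqrt_ne_zero'.mpr (by positivity))]

lemma memLp_two_id_gauss : MemLp (fun x : ℝ => x) 2 (gaussianReal 0 1) :=
  (memLp_two_iff_integrable_sq measurable_id.aestronglyMeasurable).mpr integrable_sq_gauss

/-- Mean of an affine function under the standard gaussian. -/
lemma integral_affine_gauss (m s : ℝ) : ∫ e, (m + s * e) ∂(gaussianReal 0 1) = m := by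
  rw [integral_add (integrable_const m) (integrable_id_gauss.const_mul s),
    integral_const, integral_const_mul, mean_gauss]
  simp

lemma memLp_affine_gauss (m s : ℝ) : MemLp (fun e => m + s * e) 2 (gaussianReal 0 1) :=
  (memLp_const m).add (memLp_two_id_gauss.const_mul s)

/-- Jensen for the square of an affine function. -/
lemma sq_le_integral_sq_affine (m s : ℝ) :
    m ^ 2 ≤ ∫ e, (m + s * e) ^ 2 ∂(gaussianReal 0 1) := by
  have hv := variance_nonneg (fun e => m + s * e) (gaussianReal 0 1)
  rw [variance_eq_sub (memLp_affine_gauss m s)] at hv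
  have hm : ∫ e, (m + s * e) ∂(gaussianReal 0 1) = m := integral_affine_gauss m s
  have h2 : ((fun e => m + s * e) ^ 2 : ℝ → ℝ) = fun e => (m + s * e) ^ 2 := rfl
  rw [h2] at hv
  change 0 ≤ (∫ e, (m + s * e) ^ 2 ∂(gaussianReal 0 1))
    - (∫ e, (m + s * e) ∂(gaussianReal 0 1)) ^ 2 at hv
  rw [hm] at hv
  linarith

end Stmt18Aux
end

/-- Let `C ⊆ nd_i` with `pa_i ⊆ C` in an HCM, where
`X_i = μ_i(X_pa_i) + σ_i(X_pa_i)·E_i` and `E_i ~ N(0,1)` is independent of the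
non-descendants of `i`. Then `E[X_i | X_C] = μ_i(X_pa_i)` and
`Var[X_i | X_C] = σ_i(X_pa_i)²` almost surely, and consequently the residual
`(X_i − E[X_i|X_C]) / sqrt(Var[X_i|X_C]) = E_i` is standard normal and independent of `X_C`. -/
theorem stmt_18 {Ω : Type*} {mΩ : MeasurableSpace Ω}
    (μ : Measure Ω) [IsProbabilityMeasure μ]
    {d : ℕ} (Edge : Fin d → Fin d → Prop)
    (X : Fin d → Ω → ℝ) (i : Fin d) (Ei : Ω → ℝ)
    (μf σf : (Fin d → ℝ) → ℝ)
    (hXmeas : ∀ j, Measurable (X j)) (hEimeas : Measurable Ei)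
    (hμf : Measurable μf) (hσf : Measurable σf)
    -- μf and σf depend only on the parents of i
    (hμpa : ∀ x y : Fin d → ℝ, (∀ j, Edge j i → x j = y j) → μf x = μf y)
    (hσpa : ∀ x y : Fin d → ℝ, (∀ j, Edge j i → x j = y j) → σf x = σf y)
    (hσpos : ∀ x, 0 < σf x)
    (hstruct : ∀ ω, X i ω = μf (fun j => X j ω) + σf (fun j => X j ω) * Ei ω)
    (hEgauss : Measure.map Ei μ = gaussianReal 0 1)
    (hEind : IndepFun Ei
      (fun ω => fun j : ↥{j : Fin d | ¬ Relation.ReflTransGen Edge i j} => X j.1 ω) μ)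
    (C : Set (Fin d))
    (hCnd : C ⊆ {j : Fin d | ¬ Relation.ReflTransGen Edge i j})
    (hpaC : {j : Fin d | Edge j i} ⊆ C)
    (hint : Integrable (X i) μ)
    (hint2 : Integrable (fun ω => (X i ω) ^ 2) μ) :
    (μ[X i | condAlg X C] =ᵐ[μ] fun ω => μf (fun j => X j ω)) ∧
    (μ[fun ω => (X i ω - μf (fun j => X j ω)) ^ 2 | condAlg X C]
        =ᵐ[μ] fun ω => (σf (fun j => X j ω)) ^ 2) ∧
    (∀ ω, (X i ω - μf (fun j => X j ω)) / σf (fun j => X j ω) = Ei ω) ∧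
    Measure.map Ei μ = gaussianReal 0 1 ∧
    IndepFun Ei (fun ω => fun j : C => X j ω) μ := by
  classical
  set γ : Measure ℝ := gaussianReal 0 1 with hγdef
  -- basic maps
  set nd : Set (Fin d) := {j : Fin d | ¬ Relation.ReflTransGen Edge i j} with hnddef
  set G : Ω → (nd → ℝ) := fun ω => fun j : ↥nd => X j.1 ω with hGdef
  have hG : Measurable G := measurable_pi_lambda _ fun j => hXmeas j.1
  set prj : Ω → (C → ℝ) := fun ω => fun j : C => X j ω with hprjdef
  have hprj : Measurable prj := measurable_pi_lambda _ fun j => hXmeas j.1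
  set ψ : (nd → ℝ) → (C → ℝ) := fun v => fun j : C => v ⟨j.1, hCnd j.2⟩ with hψdef
  have hψ : Measurable ψ := measurable_pi_lambda _ fun j => measurable_pi_apply _
  set ext : (C → ℝ) → (Fin d → ℝ) :=
    fun v => fun j => if h : j ∈ C then v ⟨j, h⟩ else 0 with hextdef
  have hext : Measurable ext := by
    rw [hextdef]
    refine measurable_pi_lambda _ fun j => ?_
    by_cases h : j ∈ C
    · simp only [dif_pos h]; exact measurable_pi_apply _
    · simp only [dif_neg h]; exact measurable_const
  set Φ : Ω → ℝ := fun ω => μf (ext (prj ω)) with hΦdef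
  set Ψ : Ω → ℝ := fun ω => σf (ext (prj ω)) with hΨdef
  have key_ext : ∀ ω j, Edge j i → X j ω = ext (prj ω) j := by
    intro ω j hj
    simp only [hextdef, dif_pos (hpaC hj)]
    rfl
  have hΦeq : ∀ ω, μf (fun j => X j ω) = Φ ω := fun ω => hμpa _ _ (fun j hj => key_ext ω j hj)
  have hΨeq : ∀ ω, σf (fun j => X j ω) = Ψ ω := fun ω => hσpa _ _ (fun j hj => key_ext ω j hj)
  have hΨpos : ∀ ω, 0 < Ψ ω := fun ω => hσpos _
  have hstruct' : ∀ ω, X i ω = Φ ω + Ψ ω * Ei ω := by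
    intro ω; rw [hstruct ω, hΦeq, hΨeq]
  have hΦmeas : Measurable Φ := (hμf.comp hext).comp hprj
  have hΨmeas : Measurable Ψ := (hσf.comp hext).comp hprj
  -- the conditioning σ-algebra
  have hm' : condAlg X C ≤ mΩ := hprj.comap_le
  haveI : IsFiniteMeasure (μ.trim hm') := isFiniteMeasure_trim hm'
  have hΦm' : Measurable[condAlg X C] Φ :=
    (hμf.comp hext).comp (comap_measurable prj)
  have hΨm' : Measurable[condAlg X C] Ψ :=
    (hσf.comp hext).comp (comap_measurable prj)
  -- independence of Ei from the conditioning algebra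
  have hIndprj : IndepFun Ei prj μ := by
    have h := hEind.comp measurable_id hψ
    exact h
  have hIndep : ProbabilityTheory.Indep (MeasurableSpace.comap Ei inferInstance)
      (condAlg X C) μ := (IndepFun_iff_Indep Ei prj μ).mp hIndprj
  -- moments of Ei
  have hEi_int : Integrable Ei μ := by
    have h := (integrable_map_measure (f := Ei) (g := fun x : ℝ => x)
      measurable_id.aestronglyMeasurable hEimeas.aemeasurable).mp
      (by rw [hEgauss]; exact Stmt18Aux.integrable_id_gauss)
    exact h
  have hEi2_int : Integrable (fun ω => Ei ω ^ 2) μ := by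
    have h := (integrable_map_measure (f := Ei) (g := fun x : ℝ => x ^ 2)
      (measurable_id.pow_const 2).aestronglyMeasurable hEimeas.aemeasurable).mp
      (by rw [hEgauss]; exact Stmt18Aux.integrable_sq_gauss)
    exact h
  have hEi_mean : ∫ ω, Ei ω ∂μ = 0 := by
    calc ∫ ω, Ei ω ∂μ = ∫ x, x ∂(Measure.map Ei μ) :=
          (integral_map hEimeas.aemeasurable measurable_id.aestronglyMeasurable).symm
      _ = 0 := by rw [hEgauss]; exact Stmt18Aux.mean_gauss
  have hEi_mom2 : ∫ ω, Ei ω ^ 2 ∂μ = 1 := by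
    calc ∫ ω, Ei ω ^ 2 ∂μ = ∫ x, x ^ 2 ∂(Measure.map Ei μ) :=
          (integral_map hEimeas.aemeasurable
            (measurable_id.pow_const 2).aestronglyMeasurable).symm
      _ = 1 := by rw [hEgauss]; exact Stmt18Aux.moment2_gauss
  -- conditional expectations of Ei and Ei²
  have hcEi : μ[Ei | condAlg X C] =ᵐ[μ] fun _ => 0 := by
    have h := condExp_indep_eq hEimeas.comap_le hm'
      (comap_measurable Ei).stronglyMeasurable hIndep
    refine h.trans ?_
    rw [hEi_mean]
  have hcEi2 : μ[(fun ω => Ei ω ^ 2) | condAlg X C] =ᵐ[μ] fun _ => 1 := by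
    have hsm : StronglyMeasurable[MeasurableSpace.comap Ei inferInstance]
        (fun ω => Ei ω ^ 2) :=
      ((comap_measurable Ei).pow_const 2).stronglyMeasurable
    have h := condExp_indep_eq hEimeas.comap_le hm' hsm hIndep
    refine h.trans ?_
    rw [hEi_mom2]
  -- Fubini machinery for integrability of Φ and Φ²
  set W : Ω → ℝ × ℝ := fun ω => (Φ ω, Ψ ω) with hWdef
  have hW : Measurable W := hΦmeas.prodMk hΨmeas
  have hIndW : IndepFun W Ei μ := by
    have hρ : Measurable (fun v : nd → ℝ => (μf (ext (ψ v)), σf (ext (ψ v)))) :=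
      ((hμf.comp hext).comp hψ).prodMk ((hσf.comp hext).comp hψ)
    have h := (hEind.comp measurable_id hρ).symm
    exact h
  haveI : IsProbabilityMeasure (μ.map W) := Measure.isProbabilityMeasure_map hW.aemeasurable
  have hmapPair : μ.map (fun ω => (W ω, Ei ω)) = (μ.map W).prod γ := by
    rw [← hEgauss]
    exact (indepFun_iff_map_prod_eq_prod_map_map hW.aemeasurable hEimeas.aemeasurable).mp hIndW
  have key : ∀ (φ : ℝ × ℝ → ENNReal) (Θ : (ℝ × ℝ) × ℝ → ENNReal), Measurable φ →
      Measurable Θ → (∀ w, φ w ≤ ∫⁻ e, Θ (w, e) ∂γ) →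
      ∫⁻ ω, φ (W ω) ∂μ ≤ ∫⁻ ω, Θ (W ω, Ei ω) ∂μ := by
    intro φ Θ hφ hΘ hle
    rw [← lintegral_map hφ hW, ← lintegral_map hΘ (hW.prodMk hEimeas), hmapPair,
      lintegral_prod _ hΘ.aemeasurable]
    exact lintegral_mono fun w => hle w
  -- integrability of Φ
  have hΦint : Integrable Φ μ := by
    refine ⟨hΦmeas.aestronglyMeasurable, ?_⟩
    rw [HasFiniteIntegral]
    calc ∫⁻ ω, ‖Φ ω‖₊ ∂μ
        ≤ ∫⁻ ω, ‖(W ω).1 + (W ω).2 * Ei ω‖₊ ∂μ := by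
          refine key (fun w => (‖w.1‖₊ : ENNReal)) (fun p => (‖p.1.1 + p.1.2 * p.2‖₊ : ENNReal))
            measurable_fst.nnnorm.coe_nnreal_ennreal
            (measurable_fst.fst.add (measurable_fst.snd.mul measurable_snd)).nnnorm.coe_nnreal_ennreal
            fun w => ?_
          have hmean : w.1 = ∫ e, (w.1 + w.2 * e) ∂γ := (Stmt18Aux.integral_affine_gauss _ _).symm
          calc (‖w.1‖₊ : ENNReal) = ‖∫ e, (w.1 + w.2 * e) ∂γ‖₊ := by rw [← hmean]
            _ ≤ ∫⁻ e, ‖w.1 + w.2 * e‖₊ ∂γ := by exact enorm_integral_le_lintegral_enorm _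
      _ = ∫⁻ ω, ‖X i ω‖₊ ∂μ := by
          refine lintegral_congr fun ω => ?_
          rw [← hstruct' ω]
      _ < ⊤ := hint.2
  -- integrability of Φ²
  have hΦ2int : Integrable (fun ω => Φ ω ^ 2) μ := by
    refine ⟨(hΦmeas.pow_const 2).aestronglyMeasurable, ?_⟩
    rw [HasFiniteIntegral]
    calc ∫⁻ ω, ‖Φ ω ^ 2‖₊ ∂μ
        ≤ ∫⁻ ω, ‖((W ω).1 + (W ω).2 * Ei ω) ^ 2‖₊ ∂μ := by
          refine key (fun w => (‖w.1 ^ 2‖₊ : ENNReal))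
            (fun p => (‖(p.1.1 + p.1.2 * p.2) ^ 2‖₊ : ENNReal))
            (measurable_fst.pow_const 2).nnnorm.coe_nnreal_ennreal
            ((measurable_fst.fst.add (measurable_fst.snd.mul measurable_snd)).pow_const 2).nnnorm.coe_nnreal_ennreal
            fun w => ?_
          have hJ : w.1 ^ 2 ≤ ∫ e, (w.1 + w.2 * e) ^ 2 ∂γ :=
            Stmt18Aux.sq_le_integral_sq_affine w.1 w.2
          have hInt : Integrable (fun e => (w.1 + w.2 * e) ^ 2) γ :=
            (Stmt18Aux.memLp_affine_gauss w.1 w.2).integrable_sq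
          calc (‖w.1 ^ 2‖₊ : ENNReal) = ENNReal.ofReal (w.1 ^ 2) :=
                Real.enorm_eq_ofReal (sq_nonneg _)
            _ ≤ ENNReal.ofReal (∫ e, (w.1 + w.2 * e) ^ 2 ∂γ) := ENNReal.ofReal_le_ofReal hJ
            _ = ∫⁻ e, ENNReal.ofReal ((w.1 + w.2 * e) ^ 2) ∂γ :=
                ofReal_integral_eq_lintegral_ofReal hInt
                  (Filter.Eventually.of_forall fun e => sq_nonneg _)
            _ = ∫⁻ e, (‖(w.1 + w.2 * e) ^ 2‖₊ : ENNReal) ∂γ := by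
                refine lintegral_congr fun e => ?_
                exact (Real.enorm_eq_ofReal (sq_nonneg _)).symm
      _ = ∫⁻ ω, ‖X i ω ^ 2‖₊ ∂μ := by
          refine lintegral_congr fun ω => ?_
          rw [← hstruct' ω]
      _ < ⊤ := hint2.2
  -- integrability of the products
  have hΨEi_int : Integrable (fun ω => Ψ ω * Ei ω) μ := by
    refine (hint.sub hΦint).congr (Filter.Eventually.of_forall fun ω => ?_)
    simp only [Pi.sub_apply, hstruct' ω]; ring
  have hΨ2Ei2_int : Integrable (fun ω => Ψ ω ^ 2 * Ei ω ^ 2) μ := by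
    have hXΦ : Integrable (fun ω => (X i ω - Φ ω) ^ 2) μ := by
      refine Integrable.mono' ((hint2.const_mul 2).add (hΦ2int.const_mul 2))
        ((hXmeas i).sub hΦmeas |>.pow_const 2).aestronglyMeasurable
        (Filter.Eventually.of_forall fun ω => ?_)
      rw [Real.norm_eq_abs, abs_of_nonneg (sq_nonneg _)]
      simp only [Pi.add_apply]
      nlinarith [sq_nonneg (X i ω + Φ ω)]
    refine hXΦ.congr (Filter.Eventually.of_forall fun ω => ?_)
    simp only [hstruct' ω]; ring
  -- conclusion 1
  have goal1 : μ[X i | condAlg X C] =ᵐ[μ] Φ := by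
    have hXrw : X i = fun ω => Φ ω + Ψ ω * Ei ω := funext hstruct'
    have hadd : μ[X i | condAlg X C] =ᵐ[μ]
        μ[Φ | condAlg X C] + μ[(fun ω => Ψ ω * Ei ω) | condAlg X C] := by
      rw [hXrw] at hint ⊢
      exact condExp_add hΦint hΨEi_int _
    have hΦc : μ[Φ | condAlg X C] = Φ :=
      condExp_of_stronglyMeasurable hm' hΦm'.stronglyMeasurable hΦint
    have hmul : μ[(fun ω => Ψ ω * Ei ω) | condAlg X C] =ᵐ[μ] Ψ * μ[Ei | condAlg X C] :=
      condExp_mul_of_stronglyMeasurable_left hΨm'.stronglyMeasurable hΨEi_int hEi_int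
    filter_upwards [hadd, hmul, hcEi] with ω h1 h2 h3
    rw [h1, Pi.add_apply, hΦc, h2, Pi.mul_apply, h3]
    simp
  -- conclusion 2
  have goal2 : μ[(fun ω => (X i ω - Φ ω) ^ 2) | condAlg X C] =ᵐ[μ] fun ω => Ψ ω ^ 2 := by
    have hrw : (fun ω => (X i ω - Φ ω) ^ 2) = fun ω => Ψ ω ^ 2 * Ei ω ^ 2 := by
      funext ω; rw [hstruct' ω]; ring
    rw [hrw]
    have hmul : μ[(fun ω => Ψ ω ^ 2 * Ei ω ^ 2) | condAlg X C] =ᵐ[μ]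
        (fun ω => Ψ ω ^ 2) * μ[(fun ω => Ei ω ^ 2) | condAlg X C] :=
      condExp_mul_of_stronglyMeasurable_left (hΨm'.pow_const 2).stronglyMeasurable hΨ2Ei2_int hEi2_int
    filter_upwards [hmul, hcEi2] with ω h1 h2
    rw [h1, Pi.mul_apply, h2]
    simp
  refine ⟨?_, ?_, ?_, hEgauss, ?_⟩
  · refine goal1.trans ?_
    filter_upwards with ω
    rw [hΦeq]
  · have : (fun ω => (X i ω - μf (fun j => X j ω)) ^ 2) = fun ω => (X i ω - Φ ω) ^ 2 := by
      funext ω; rw [hΦeq]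
    rw [this]
    refine goal2.trans ?_
    filter_upwards with ω
    rw [hΨeq]
  · intro ω
    rw [hstruct ω, add_sub_cancel_left, mul_comm,
      mul_div_assoc, div_self (hσpos _).ne', mul_one]
  · exact hIndprj
end
end
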